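/- arXiv:2310.17282 — 5 statements merged into one kernel-verified Lean document; each statement's English description precedes it below -/
import Mathlib

section
/- For any two opposite lazy l-tracks f and g on the multilayered cycle MC_n^k, there exists a step i ∈ {1,...,l} such that f(i) and g(i) lie in the same layer, i.e. p₂(f(i)) = p₂(g(i)). -/
/-- The multilayered cycle `MC n k` on vertex set `ZMod n × Fin k`. -/
def MC (n k : ℕ) : SimpleGraph (ZMod n × Fin k) where
  Adj u v := u ≠ v ∧ ((u.1 = v.1 ∧ (u.2.1 + 1 = v.2.1 ∨ v.2.1 + 1 = u.2.1)) ∨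
      (u.2 = v.2 ∧ (u.1 + 1 = v.1 ∨ v.1 + 1 = u.1)))
  symm := by
    constructor
    rintro u v ⟨h1, h2⟩
    refine ⟨h1.symm, ?_⟩
    rcases h2 with ⟨ha, hb⟩ | ⟨ha, hb⟩
    · exact Or.inl ⟨ha.symm, hb.symm⟩
    · exact Or.inr ⟨ha.symm, hb.symm⟩
  loopless := by constructor; rintro u ⟨h1, -⟩; exact h1 rfl

/-- A lazy `l`-track on `G`: surjective, consecutive values equal or adjacent. -/
def IsLazyTrack {V : Type*} (G : SimpleGraph V) {l : ℕ} (f : Fin l → V) : Prop :=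
  Function.Surjective f ∧
    ∀ i : Fin l, ∀ h : i.1 + 1 < l, f ⟨i.1 + 1, h⟩ = f i ∨ G.Adj (f i) (f ⟨i.1 + 1, h⟩)

/-- An `l`-track on `G`: surjective, consecutive values adjacent. -/
def IsTrack {V : Type*} (G : SimpleGraph V) {l : ℕ} (f : Fin l → V) : Prop :=
  Function.Surjective f ∧
    ∀ i : Fin l, ∀ h : i.1 + 1 < l, G.Adj (f i) (f ⟨i.1 + 1, h⟩)

/-- `f` and `g` are opposite lazy `l`-tracks: exactly one of them moves at each step. -/
def OppositeTracks {V : Type*} (G : SimpleGraph V) {l : ℕ} (f g : Fin l → V) : Prop :=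
  ∀ i : Fin l, ∀ h : i.1 + 1 < l,
    (G.Adj (f i) (f ⟨i.1 + 1, h⟩) ↔ g ⟨i.1 + 1, h⟩ = g i)


theorem stmt1 (n k l : ℕ) (hn : 3 ≤ n) (hk : 2 ≤ k)
    (f g : Fin l → ZMod n × Fin k)
    (hf : IsLazyTrack (MC n k) f) (hg : IsLazyTrack (MC n k) g)
    (hop : OppositeTracks (MC n k) f g) :
    ∃ i : Fin l, (f i).2 = (g i).2 := by
  by_contra hcon
  push_neg at hcon
  have hk0 : 0 < k := by omega
  obtain ⟨i0, -⟩ := hf.1 (0, ⟨0, hk0⟩)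
  have hl : 0 < l := by
    rcases Nat.eq_zero_or_pos l with h | h
    · exact absurd i0.2 (by omega)
    · exact h
  have hDne : ∀ i : Fin l, ((f i).2.1 : ℤ) - ((g i).2.1 : ℤ) ≠ 0 := by
    intro i h
    exact hcon i (Fin.ext (by omega))
  have adjlayer : ∀ u v : ZMod n × Fin k, (MC n k).Adj u v →
      ((v.2.1 : ℤ) - u.2.1 = 1 ∨ (v.2.1 : ℤ) - u.2.1 = -1 ∨ (v.2.1 : ℤ) = u.2.1) := by
    rintro u v ⟨-, ⟨-, h | h⟩ | ⟨h, -⟩⟩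
    · left; omega
    · right; left; omega
    · right; right; rw [h]
  have step : ∀ i : Fin l, ∀ h : i.1 + 1 < l,
      (((f ⟨i.1+1, h⟩).2.1 : ℤ) - ((g ⟨i.1+1, h⟩).2.1 : ℤ) ≤ ((f i).2.1 : ℤ) - ((g i).2.1 : ℤ) + 1
      ∧ ((f i).2.1 : ℤ) - ((g i).2.1 : ℤ) - 1 ≤ ((f ⟨i.1+1, h⟩).2.1 : ℤ) - ((g ⟨i.1+1, h⟩).2.1 : ℤ)) := by
    intro i h
    by_cases hadj : (MC n k).Adj (f i) (f ⟨i.1+1, h⟩)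
    · have hgstay : g ⟨i.1+1, h⟩ = g i := (hop i h).mp hadj
      have := adjlayer _ _ hadj
      rw [hgstay]
      omega
    · have hfstay : f ⟨i.1+1, h⟩ = f i := (hf.2 i h).resolve_right hadj
      have hgmove : g ⟨i.1+1, h⟩ ≠ g i := fun he => hadj ((hop i h).mpr he)
      have hgadj : (MC n k).Adj (g i) (g ⟨i.1+1, h⟩) := (hg.2 i h).resolve_left hgmove
      have := adjlayer _ _ hgadj
      rw [hfstay]
      omega
  rcases lt_or_gt_of_ne (hDne ⟨0, hl⟩) with h0 | h0
  · -- f below g always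
    have all : ∀ m, ∀ hm : m < l, ((f ⟨m, hm⟩).2.1 : ℤ) - ((g ⟨m, hm⟩).2.1 : ℤ) < 0 := by
      intro m
      induction m with
      | zero => intro hm; exact h0
      | succ p ih =>
        intro hm
        have hp : p < l := by omega
        have h1 : (((f ⟨p+1, hm⟩).2.1 : ℤ) - ((g ⟨p+1, hm⟩).2.1 : ℤ) ≤ ((f ⟨p, hp⟩).2.1 : ℤ) - ((g ⟨p, hp⟩).2.1 : ℤ) + 1
            ∧ ((f ⟨p, hp⟩).2.1 : ℤ) - ((g ⟨p, hp⟩).2.1 : ℤ) - 1 ≤ ((f ⟨p+1, hm⟩).2.1 : ℤ) - ((g ⟨p+1, hm⟩).2.1 : ℤ)) := step ⟨p, hp⟩ hm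
        have h2 := ih hp
        have h3 := hDne ⟨p+1, hm⟩
        omega
    obtain ⟨j, hj⟩ := hf.1 (0, ⟨k-1, by omega⟩)
    have h1 := all j.1 j.2
    have h2 : (f j).2.1 = k - 1 := by rw [hj]
    have h3 : (g j).2.1 < k := (g j).2.2
    simp only [Fin.eta] at h1
    omega
  · have all : ∀ m, ∀ hm : m < l, 0 < ((f ⟨m, hm⟩).2.1 : ℤ) - ((g ⟨m, hm⟩).2.1 : ℤ) := by
      intro m
      induction m with
      | zero => intro hm; exact h0
      | succ p ih =>
        intro hm
        have hp : p < l := by omega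
        have h1 : (((f ⟨p+1, hm⟩).2.1 : ℤ) - ((g ⟨p+1, hm⟩).2.1 : ℤ) ≤ ((f ⟨p, hp⟩).2.1 : ℤ) - ((g ⟨p, hp⟩).2.1 : ℤ) + 1
            ∧ ((f ⟨p, hp⟩).2.1 : ℤ) - ((g ⟨p, hp⟩).2.1 : ℤ) - 1 ≤ ((f ⟨p+1, hm⟩).2.1 : ℤ) - ((g ⟨p+1, hm⟩).2.1 : ℤ)) := step ⟨p, hp⟩ hm
        have h2 := ih hp
        have h3 := hDne ⟨p+1, hm⟩
        omega
    obtain ⟨j, hj⟩ := hg.1 (0, ⟨k-1, by omega⟩)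
    have h1 := all j.1 j.2
    have h2 : (g j).2.1 = k - 1 := by rw [hj]
    have h3 : (f j).2.1 < k := (f j).2.2
    simp only [Fin.eta] at h1
    omega
end

section
/- The Cartesian vertex span of the multilayered cycle MC_n^k is at most ⌊n/2⌋; that is, for any two opposite lazy l-tracks f and g on MC_n^k, min over i of d(f(i),g(i)) is at most ⌊n/2⌋. -/
lemma MC_walk (n k : ℕ) (hn : 3 ≤ n) (b : Fin k) (m : ℕ) :
    ∀ a : ZMod n, ∃ w : (MC n k).Walk (a, b) (a + (m : ZMod n), b), w.length = m := by
  haveI : Fact (1 < n) := ⟨by omega⟩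
  induction m with
  | zero =>
    intro a
    exact ⟨SimpleGraph.Walk.nil.copy rfl (by push_cast; rw [add_zero]), by simp⟩
  | succ m ih =>
    intro a
    obtain ⟨w, hw⟩ := ih (a + 1)
    have hadj : (MC n k).Adj (a, b) (a + 1, b) := by
      refine ⟨?_, Or.inr ⟨rfl, Or.inl rfl⟩⟩
      intro h
      have : a = a + 1 := congrArg Prod.fst h
      have h0 : (0 : ZMod n) = 1 := by linear_combination this
      exact one_ne_zero h0.symm
    refine ⟨((SimpleGraph.Walk.cons hadj w).copy rfl (by push_cast; ring_nf)), ?_⟩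
    simp [hw]

lemma MC_dist_layer (n k : ℕ) (hn : 3 ≤ n) (b : Fin k) (a c : ZMod n) :
    (MC n k).dist (a, b) (c, b) ≤ n / 2 := by
  haveI : NeZero n := ⟨by omega⟩
  by_cases hac : a = c
  · subst hac; simp [SimpleGraph.dist_self]
  have hvlt : (c - a).val < n := ZMod.val_lt _
  by_cases hv : (c - a).val ≤ n / 2
  · obtain ⟨w, hw⟩ := MC_walk n k hn b (c - a).val a
    have he : a + (((c - a).val : ℕ) : ZMod n) = c := by
      rw [ZMod.natCast_zmod_val]; ring
    calc (MC n k).dist (a, b) (c, b) ≤ ((w.copy rfl (by rw [he])).length) :=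
          SimpleGraph.dist_le _
      _ ≤ n / 2 := by rw [SimpleGraph.Walk.length_copy, hw]; exact hv
  · haveI : NeZero (c - a) := ⟨sub_ne_zero.mpr (Ne.symm hac)⟩
    have hw2 : (a - c).val = n - (c - a).val := by
      rw [show a - c = -(c - a) by ring, ZMod.val_neg_of_ne_zero]
    obtain ⟨w, hw⟩ := MC_walk n k hn b (a - c).val c
    have he : c + (((a - c).val : ℕ) : ZMod n) = a := by
      rw [ZMod.natCast_zmod_val]; ring
    rw [SimpleGraph.dist_comm]
    calc (MC n k).dist (c, b) (a, b) ≤ ((w.copy rfl (by rw [he])).length) :=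
          SimpleGraph.dist_le _
      _ ≤ n / 2 := by rw [SimpleGraph.Walk.length_copy, hw, hw2]; omega

lemma ivt_aux (D : ℕ → ℤ) (hstep : ∀ m, D (m + 1) ≤ D m + 1) :
    ∀ d a, D a ≤ 0 → 0 ≤ D (a + d) → ∃ m, D m = 0 := by
  intro d
  induction d with
  | zero => intro a h1 h2; exact ⟨a, le_antisymm h1 (by simpa using h2)⟩
  | succ d ih =>
    intro a h1 h2
    rcases eq_or_lt_of_le h1 with h | h
    · exact ⟨a, h⟩
    · have : D (a + 1) ≤ 0 := by have := hstep a; omega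
      exact ih (a + 1) this (by rw [show a + 1 + d = a + (d + 1) by omega]; exact h2)

lemma ivt (D : ℕ → ℤ) (hstep : ∀ m, D (m + 1) ≤ D m + 1 ∧ D m ≤ D (m + 1) + 1)
    (i j : ℕ) (hi : D i ≤ 0) (hj : 0 ≤ D j) : ∃ m, D m = 0 := by
  rcases le_or_gt i j with h | h
  · exact ivt_aux D (fun m => (hstep m).1) (j - i) i hi
      (by rw [show i + (j - i) = j by omega]; exact hj)
  · obtain ⟨m, hm⟩ := ivt_aux (fun m => -D m)
      (fun m => by have := (hstep m).2; show -D (m + 1) ≤ -D m + 1; omega)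
      (i - j) j (by show -D j ≤ 0; omega)
      (by show (0:ℤ) ≤ -D (j + (i - j)); rw [show j + (i - j) = i by omega]; omega)
    have : -D m = 0 := hm
    exact ⟨m, by omega⟩

lemma MC_adj_layer {n k : ℕ} {u v : ZMod n × Fin k} (h : (MC n k).Adj u v) :
    u.2.1 = v.2.1 ∨ u.2.1 + 1 = v.2.1 ∨ v.2.1 + 1 = u.2.1 := by
  rcases h.2 with ⟨-, h⟩ | ⟨h, -⟩
  · exact Or.inr h
  · exact Or.inl (by rw [h])

theorem stmt5 (n k l : ℕ) (hn : 3 ≤ n) (hk : 2 ≤ k)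
    (f g : Fin l → ZMod n × Fin k)
    (hf : IsLazyTrack (MC n k) f) (hg : IsLazyTrack (MC n k) g)
    (hop : OppositeTracks (MC n k) f g) :
    ∃ i : Fin l, (MC n k).dist (f i) (g i) ≤ n / 2 := by
  -- l is positive
  have hk0 : (0 : ℕ) < k := by omega
  obtain ⟨i0, hi0⟩ := hf.1 ((0 : ZMod n), ⟨0, hk0⟩)
  have hl : 0 < l := Nat.lt_of_le_of_lt (Nat.zero_le _) i0.2
  -- index function and layer difference
  set F : ℕ → Fin l := fun m => ⟨min m (l - 1), by omega⟩ with hF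
  have hFid : ∀ i : Fin l, F i.1 = i := by
    intro i
    apply Fin.ext
    simp only [hF]
    omega
  set D : ℕ → ℤ := fun m => ((f (F m)).2.1 : ℤ) - ((g (F m)).2.1 : ℤ) with hD
  -- step bound
  have hstep : ∀ m, D (m + 1) ≤ D m + 1 ∧ D m ≤ D (m + 1) + 1 := by
    intro m
    by_cases hm : m + 1 < l
    · have hm' : m < l := by omega
      have hFm : F m = ⟨m, hm'⟩ := by apply Fin.ext; simp only [hF]; omega
      have hFm1 : F (m + 1) = ⟨m + 1, hm⟩ := by apply Fin.ext; simp only [hF]; omega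
      have hop' : ((MC n k).Adj (f ⟨m, hm'⟩) (f ⟨m + 1, hm⟩) ↔
          g ⟨m + 1, hm⟩ = g ⟨m, hm'⟩) := hop ⟨m, hm'⟩ hm
      have hfstep : f ⟨m + 1, hm⟩ = f ⟨m, hm'⟩ ∨
          (MC n k).Adj (f ⟨m, hm'⟩) (f ⟨m + 1, hm⟩) := hf.2 ⟨m, hm'⟩ hm
      have hgstep : g ⟨m + 1, hm⟩ = g ⟨m, hm'⟩ ∨
          (MC n k).Adj (g ⟨m, hm'⟩) (g ⟨m + 1, hm⟩) := hg.2 ⟨m, hm'⟩ hm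
      rcases hfstep with hfe | hfa
      · -- f stays, g moves by at most one layer
        have hnadj : ¬ (MC n k).Adj (f ⟨m, hm'⟩) (f ⟨m + 1, hm⟩) := by
          rw [hfe]; exact (MC n k).loopless.irrefl _
        have hgne : g ⟨m + 1, hm⟩ ≠ g ⟨m, hm'⟩ := fun h => hnadj (hop'.mpr h)
        have hga : (MC n k).Adj (g ⟨m, hm'⟩) (g ⟨m + 1, hm⟩) := by
          rcases hgstep with h | h
          · exact absurd h hgne
          · exact h
        have hl1 := MC_adj_layer hga
        simp only [hD, hFm, hFm1, hfe]
        omega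
      · -- f moves, g stays
        have hge : g ⟨m + 1, hm⟩ = g ⟨m, hm'⟩ := hop'.mp hfa
        have hl1 := MC_adj_layer hfa
        simp only [hD, hFm, hFm1, hge]
        omega
    · have : F (m + 1) = F m := by apply Fin.ext; simp only [hF]; omega
      simp [hD, this]
  -- D takes a nonpositive and a nonnegative value
  have hneg : D i0.1 ≤ 0 := by
    simp [hD, hFid i0, hi0]
  obtain ⟨j0, hj0⟩ := hg.1 ((0 : ZMod n), ⟨0, hk0⟩)
  have hpos : 0 ≤ D j0.1 := by
    simp [hD, hFid j0, hj0]
  obtain ⟨m, hm⟩ := ivt D hstep i0.1 j0.1 hneg hpos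
  refine ⟨F m, ?_⟩
  have hlayer : (f (F m)).2 = (g (F m)).2 := by
    apply Fin.ext
    simp only [hD] at hm
    omega
  have h1 : f (F m) = ((f (F m)).1, (f (F m)).2) := rfl
  have h2 : g (F m) = ((g (F m)).1, (f (F m)).2) := by rw [hlayer]
  rw [h1, h2]
  exact MC_dist_layer n k hn _ _ _
end

section
/- For any two lazy l-tracks f and g on the multilayered cycle MC_n^k, there exists a step i ∈ {1,...,l} such that |p₂(f(i)) − p₂(g(i))| ≤ 1, i.e. f(i) and g(i) are in the same or adjacent layers. -/
lemma layer_step {n k : ℕ} (u v : ZMod n × Fin k)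
    (h : v = u ∨ (MC n k).Adj u v) :
    -1 ≤ ((v.2.1 : ℤ) - u.2.1) ∧ ((v.2.1 : ℤ) - u.2.1) ≤ 1 := by
  rcases h with rfl | ⟨-, ⟨-, h⟩ | ⟨h, -⟩⟩
  · omega
  · rcases h with h | h <;> omega
  · rw [h]; omega

theorem stmt8 (n k l : ℕ) (hn : 3 ≤ n) (hk : 2 ≤ k)
    (f g : Fin l → ZMod n × Fin k)
    (hf : IsLazyTrack (MC n k) f) (hg : IsLazyTrack (MC n k) g) :
    ∃ i : Fin l, |(((f i).2.1 : ℤ) - ((g i).2.1 : ℤ))| ≤ 1 := by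
  by_contra hcon
  push_neg at hcon
  have habs : ∀ i : Fin l, (((f i).2.1 : ℤ) - (g i).2.1 ≤ -2) ∨ (2 ≤ ((f i).2.1 : ℤ) - (g i).2.1) := by
    intro i
    have := hcon i
    rcases abs_cases (((f i).2.1 : ℤ) - (g i).2.1) with ⟨h1, h2⟩ | ⟨h1, h2⟩ <;> omega
  have hl : 0 < l := by
    rcases Nat.eq_zero_or_pos l with rfl | h
    · obtain ⟨i, -⟩ := hf.1 (0, ⟨0, by omega⟩)
      exact absurd i.2 (by omega)
    · exact h
  have hstep : ∀ (m : ℕ) (h : m + 1 < l),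
      -2 ≤ ((((f ⟨m+1, h⟩).2.1 : ℤ) - (g ⟨m+1, h⟩).2.1) - (((f ⟨m, by omega⟩).2.1 : ℤ) - (g ⟨m, by omega⟩).2.1)) ∧
      ((((f ⟨m+1, h⟩).2.1 : ℤ) - (g ⟨m+1, h⟩).2.1) - (((f ⟨m, by omega⟩).2.1 : ℤ) - (g ⟨m, by omega⟩).2.1)) ≤ 2 := by
    intro m h
    have h1 := layer_step _ _ (hf.2 ⟨m, by omega⟩ h)
    have h2 := layer_step _ _ (hg.2 ⟨m, by omega⟩ h)
    simp only [Fin.val_mk] at h1 h2 ⊢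
    omega
  rcases habs ⟨0, hl⟩ with h0 | h0
  · have hall : ∀ (m : ℕ) (hm : m < l),
        ((f ⟨m, hm⟩).2.1 : ℤ) - (g ⟨m, hm⟩).2.1 ≤ -2 := by
      intro m
      induction m with
      | zero => intro _; exact h0
      | succ p ih =>
        intro hm
        have h1 := ih (by omega)
        have h2 := hstep p hm
        rcases habs ⟨p + 1, hm⟩ with h | h <;> omega
    obtain ⟨i, hi⟩ := hg.1 (0, ⟨0, by omega⟩)
    have h1 := hall i.1 i.2
    rw [Fin.eta] at h1
    rw [hi] at h1
    simp at h1
    omega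
  · have hall : ∀ (m : ℕ) (hm : m < l),
        2 ≤ ((f ⟨m, hm⟩).2.1 : ℤ) - (g ⟨m, hm⟩).2.1 := by
      intro m
      induction m with
      | zero => intro _; exact h0
      | succ p ih =>
        intro hm
        have h1 := ih (by omega)
        have h2 := hstep p hm
        rcases habs ⟨p + 1, hm⟩ with h | h <;> omega
    obtain ⟨i, hi⟩ := hf.1 (0, ⟨0, by omega⟩)
    have h1 := hall i.1 i.2
    rw [Fin.eta] at h1
    rw [hi] at h1
    simp at h1
    omega
end

section
/- For any two lazy l-tracks f and g on the multilayered cycle MC_n^k, min over i ∈ {1,...,l} of d(f(i), g(i)) is at most ⌊n/2⌋ + 1. Hence the strong vertex span of MC_n^k is at most ⌊n/2⌋ + 1. -/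
section Aux

variable {n k : ℕ}

lemma mc_adj_right (hn : 3 ≤ n) (x : ZMod n) (j : Fin k) :
    (MC n k).Adj (x, j) (x + 1, j) := by
  haveI : Fact (1 < n) := ⟨by omega⟩
  refine ⟨?_, Or.inr ⟨rfl, Or.inl rfl⟩⟩
  intro h
  have hx : x = x + 1 := congrArg Prod.fst h
  have : (1 : ZMod n) = 0 := by linear_combination -hx
  exact one_ne_zero this

lemma walk_add (hn : 3 ≤ n) (x : ZMod n) (j : Fin k) (m : ℕ) :
    ∃ p : (MC n k).Walk (x, j) (x + (m : ZMod n), j), p.length = m := by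
  induction m with
  | zero => exact ⟨SimpleGraph.Walk.nil.copy rfl (by simp), by simp⟩
  | succ m ih =>
    obtain ⟨p, hp⟩ := ih
    refine ⟨(p.concat (mc_adj_right hn (x + (m : ZMod n)) j)).copy rfl
      (by push_cast; rw [add_assoc]), ?_⟩
    simp [hp]

lemma cycle_walk (hn : 3 ≤ n) (u : ZMod n × Fin k) (y : ZMod n) :
    ∃ p : (MC n k).Walk u ((y, u.2) : ZMod n × Fin k), p.length ≤ n / 2 := by
  haveI : NeZero n := ⟨by omega⟩
  set m := (y - u.1).val with hm
  have hcast : ((m : ZMod n)) = y - u.1 := ZMod.natCast_rightInverse _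
  have hmlt : m < n := ZMod.val_lt _
  by_cases hle : m ≤ n / 2
  · obtain ⟨p, hp⟩ := walk_add hn u.1 u.2 m
    refine ⟨p.copy (by simp) (by rw [hcast]; congr 1; ring), ?_⟩
    simpa [hp]
  · obtain ⟨p, hp⟩ := walk_add hn y u.2 (n - m)
    have hend : y + ((n - m : ℕ) : ZMod n) = u.1 := by
      rw [Nat.cast_sub hmlt.le, ZMod.natCast_self, hcast]
      ring
    refine ⟨(p.reverse).copy (by rw [hend]) rfl, ?_⟩
    simp [hp]
    omega

lemma dist_close (hn : 3 ≤ n) (u v : ZMod n × Fin k)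
    (h : u.2.1 = v.2.1 ∨ u.2.1 + 1 = v.2.1 ∨ v.2.1 + 1 = u.2.1) :
    (MC n k).dist u v ≤ n / 2 + 1 := by
  obtain ⟨p, hp⟩ := cycle_walk hn u v.1
  by_cases heq : u.2 = v.2
  · have hv : ((v.1, u.2) : ZMod n × Fin k) = v := by rw [heq]
    have := SimpleGraph.dist_le (p.copy rfl hv)
    simp at this
    omega
  · have hadj : (MC n k).Adj (v.1, u.2) (v.1, v.2) := by
      refine ⟨?_, Or.inl ⟨rfl, ?_⟩⟩
      · simp [Prod.ext_iff]; exact heq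
      · rcases h with h | h | h
        · exact absurd (Fin.ext h) heq
        · exact Or.inl h
        · exact Or.inr h
    have := SimpleGraph.dist_le ((p.concat hadj).copy rfl Prod.mk.eta)
    simp at this
    omega

lemma layer_step_s10 {l : ℕ} {f : Fin l → ZMod n × Fin k}
    (hf : IsLazyTrack (MC n k) f) (i : Fin l) (h : i.1 + 1 < l) :
    ((f ⟨i.1 + 1, h⟩).2.1 : ℤ) ≤ (f i).2.1 + 1 ∧
      ((f i).2.1 : ℤ) ≤ (f ⟨i.1 + 1, h⟩).2.1 + 1 := by
  rcases hf.2 i h with h' | ⟨-, ⟨-, hb⟩ | ⟨hb, -⟩⟩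
  · rw [h']; omega
  · omega
  · rw [hb]; omega

end Aux

theorem stmt10 (n k l : ℕ) (hn : 3 ≤ n) (hk : 2 ≤ k)
    (f g : Fin l → ZMod n × Fin k)
    (hf : IsLazyTrack (MC n k) f) (hg : IsLazyTrack (MC n k) g) :
    ∃ i : Fin l, (MC n k).dist (f i) (g i) ≤ n / 2 + 1 := by
  by_contra hcon
  push_neg at hcon
  -- dichotomy: at every index the layers of f and g differ by at least 2
  have hD : ∀ i : Fin l, (f i).2.1 + 2 ≤ (g i).2.1 ∨ (g i).2.1 + 2 ≤ (f i).2.1 := by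
    intro i
    by_contra h'
    push_neg at h'
    have := dist_close hn (f i) (g i) (by omega)
    have := hcon i
    omega
  obtain ⟨a, ha⟩ := hf.1 ((0 : ZMod n), ⟨0, by omega⟩)
  obtain ⟨b, hb⟩ := hg.1 ((0 : ZMod n), ⟨0, by omega⟩)
  have hfa : (f a).2.1 = 0 := by rw [ha]
  have hgb : (g b).2.1 = 0 := by rw [hb]
  -- forward from a, f's layer stays at least 2 below g's
  have hA : ∀ m : ℕ, ∀ h : a.1 + m < l, (f ⟨a.1 + m, h⟩).2.1 + 2 ≤ (g ⟨a.1 + m, h⟩).2.1 := by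
    intro m
    induction m with
    | zero =>
      intro h
      have h0 : (⟨a.1 + 0, h⟩ : Fin l) = a := by ext; simp
      rw [h0]
      rcases hD a with h' | h' <;> omega
    | succ m ih =>
      intro h
      have h1 : a.1 + m < l := by omega
      have ihm := ih h1
      have hsf := layer_step_s10 hf ⟨a.1 + m, h1⟩ (by show a.1 + m + 1 < l; omega)
      have hsg := layer_step_s10 hg ⟨a.1 + m, h1⟩ (by show a.1 + m + 1 < l; omega)
      have heq : (⟨(⟨a.1 + m, h1⟩ : Fin l).1 + 1, by show a.1 + m + 1 < l; omega⟩ : Fin l) = ⟨a.1 + (m+1), h⟩ := by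
        ext; simp; omega
      rw [heq] at hsf hsg
      rcases hD ⟨a.1 + (m+1), h⟩ with h' | h'
      · exact h'
      · omega
  have hB : ∀ m : ℕ, ∀ h : b.1 + m < l, (g ⟨b.1 + m, h⟩).2.1 + 2 ≤ (f ⟨b.1 + m, h⟩).2.1 := by
    intro m
    induction m with
    | zero =>
      intro h
      have h0 : (⟨b.1 + 0, h⟩ : Fin l) = b := by ext; simp
      rw [h0]
      rcases hD b with h' | h' <;> omega
    | succ m ih =>
      intro h
      have h1 : b.1 + m < l := by omega
      have ihm := ih h1
      have hsf := layer_step_s10 hf ⟨b.1 + m, h1⟩ (by show b.1 + m + 1 < l; omega)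
      have hsg := layer_step_s10 hg ⟨b.1 + m, h1⟩ (by show b.1 + m + 1 < l; omega)
      have heq : (⟨(⟨b.1 + m, h1⟩ : Fin l).1 + 1, by show b.1 + m + 1 < l; omega⟩ : Fin l) = ⟨b.1 + (m+1), h⟩ := by
        ext; simp; omega
      rw [heq] at hsf hsg
      rcases hD ⟨b.1 + (m+1), h⟩ with h' | h'
      · omega
      · exact h'
  -- evaluate both at c = max a b
  set c : ℕ := max a.1 b.1 with hc
  have hcl : c < l := by rcases max_cases a.1 b.1 with ⟨h', -⟩ | ⟨h', -⟩ <;> rw [hc, h'] <;> [exact a.2; exact b.2]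
  have hca : a.1 + (c - a.1) = c := by omega
  have hcb : b.1 + (c - b.1) = c := by omega
  have h1 := hA (c - a.1) (by omega)
  have h2 := hB (c - b.1) (by omega)
  have e1 : (⟨a.1 + (c - a.1), by omega⟩ : Fin l) = ⟨c, hcl⟩ := by ext; simpa using hca
  have e2 : (⟨b.1 + (c - b.1), by omega⟩ : Fin l) = ⟨c, hcl⟩ := by ext; simpa using hcb
  rw [e1] at h1
  rw [e2] at h2
  omega
end

section
/- There exist an l ∈ ℕ and two l-tracks f, g on the multilayered cycle MC_n^k such that d(f(i), g(i)) ≥ ⌊n/2⌋ + 1 for all i ∈ {1,...,l}. Consequently both the strong vertex span and the direct vertex span of MC_n^k equal ⌊n/2⌋ + 1. -/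
def cdist (n : ℕ) (a b : ZMod n) : ℕ := min ((b - a).val) (n - (b - a).val)

section S2
variable {n k : ℕ}

lemma MC_adj_cycle (hn : 3 ≤ n) (a : ZMod n) (j : Fin k) :
    (MC n k).Adj (a, j) (a + 1, j) := by
  haveI : Fact (1 < n) := ⟨by omega⟩
  refine ⟨?_, Or.inr ⟨rfl, Or.inl rfl⟩⟩
  simp only [ne_eq, Prod.mk.injEq, not_and]
  intro h
  exact absurd (left_eq_add.mp h) one_ne_zero

lemma MC_adj_layer_s12 (a : ZMod n) (j j' : Fin k)
    (h : j.1 + 1 = j'.1 ∨ j'.1 + 1 = j.1) : (MC n k).Adj (a, j) (a, j') := by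
  refine ⟨?_, Or.inl ⟨rfl, h⟩⟩
  simp only [ne_eq, Prod.mk.injEq, Fin.ext_iff]
  rintro ⟨-, h2⟩
  omega

lemma walk_horiz (hn : 3 ≤ n) (j : Fin k) :
    ∀ (t : ℕ) (a : ZMod n), ∃ p : (MC n k).Walk (a, j) (a + (t : ℕ), j), p.length = t := by
  intro t
  induction t with
  | zero => intro a; exact ⟨SimpleGraph.Walk.nil.copy rfl (by push_cast; ring_nf), by simp⟩
  | succ t ih =>
    intro a
    obtain ⟨p, hp⟩ := ih (a + 1)
    refine ⟨(SimpleGraph.Walk.cons (MC_adj_cycle hn a j) p).copy rfl (by push_cast; ring_nf), ?_⟩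
    simp [hp]

lemma walk_vert (a : ZMod n) :
    ∀ (d : ℕ) (j j' : Fin k), Nat.dist j.1 j'.1 ≤ d →
      ∃ p : (MC n k).Walk (a, j) (a, j'), p.length ≤ d := by
  intro d
  induction d with
  | zero =>
    intro j j' h
    have : j = j' := Fin.ext (by simp [Nat.dist] at h; omega)
    subst this
    exact ⟨SimpleGraph.Walk.nil, by simp⟩
  | succ d ih =>
    intro j j' h
    by_cases hjj : j = j'
    · subst hjj; exact ⟨SimpleGraph.Walk.nil, by simp⟩
    · have hne : j.1 ≠ j'.1 := fun hc => hjj (Fin.ext hc)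
      rcases Nat.lt_or_ge j.1 j'.1 with hlt | hge
      · have hk2 : j.1 + 1 < k := lt_of_le_of_lt hlt j'.2
        obtain ⟨p, hp⟩ := ih ⟨j.1 + 1, hk2⟩ j' (by simp [Nat.dist] at *; omega)
        exact ⟨SimpleGraph.Walk.cons (MC_adj_layer_s12 a j ⟨j.1 + 1, hk2⟩ (Or.inl rfl)) p,
          by simpa using Nat.add_le_add_right hp 1⟩
      · have h1 : 1 ≤ j.1 := by omega
        have hk2 : j.1 - 1 < k := by omega
        obtain ⟨p, hp⟩ := ih ⟨j.1 - 1, hk2⟩ j' (by simp [Nat.dist] at *; omega)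
        exact ⟨SimpleGraph.Walk.cons (MC_adj_layer_s12 a j ⟨j.1 - 1, hk2⟩ (Or.inr (by simp; omega))) p,
          by simpa using Nat.add_le_add_right hp 1⟩

lemma cast_val_eq (hn : 3 ≤ n) (x : ZMod n) : ((x.val : ℕ) : ZMod n) = x := by
  haveI : NeZero n := ⟨by omega⟩
  rw [ZMod.natCast_val, ZMod.cast_id]

lemma exists_walk_le (hn : 3 ≤ n) (u v : ZMod n × Fin k) :
    ∃ p : (MC n k).Walk u v, p.length ≤ cdist n u.1 v.1 + Nat.dist u.2.1 v.2.1 := by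
  haveI : NeZero n := ⟨by omega⟩
  obtain ⟨a, j⟩ := u
  obtain ⟨b, j'⟩ := v
  by_cases hc : (b - a).val ≤ n - (b - a).val
  · -- forward walk
    obtain ⟨p1, hp1⟩ := walk_horiz hn j ((b - a).val) a
    have hab : a + (((b - a).val : ℕ) : ZMod n) = b := by rw [cast_val_eq hn]; ring
    obtain ⟨p2, hp2⟩ := walk_vert b (Nat.dist j.1 j'.1) j j' le_rfl
    refine ⟨(p1.copy rfl (by rw [hab])).append p2, ?_⟩
    have hcd : cdist n a b = (b - a).val := by unfold cdist; omega
    simp only [SimpleGraph.Walk.length_append, SimpleGraph.Walk.length_copy, hp1, hcd]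
    omega
  · -- backward walk, reversed
    obtain ⟨p1, hp1⟩ := walk_horiz hn j' ((a - b).val) b
    have hab : b + (((a - b).val : ℕ) : ZMod n) = a := by rw [cast_val_eq hn]; ring
    obtain ⟨p2, hp2⟩ := walk_vert a (Nat.dist j'.1 j.1) j' j le_rfl
    have hval : (a - b).val ≤ n - (b - a).val := by
      rcases eq_or_ne a b with h | h
      · subst h; simp
      · have h0 : b - a ≠ 0 := sub_ne_zero.mpr (Ne.symm h)
        have : a - b = -(b - a) := by ring
        rw [this, ZMod.neg_val]
        simp [h0]
    refine ⟨((p1.copy rfl (by rw [hab])).append p2).reverse, ?_⟩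
    have hcd : cdist n a b = n - (b - a).val := by unfold cdist; omega
    simp only [SimpleGraph.Walk.length_reverse, SimpleGraph.Walk.length_append,
      SimpleGraph.Walk.length_copy, hp1, hcd, Nat.dist_comm j.1 j'.1]
    omega

lemma mc_dist_le (hn : 3 ≤ n) (u v : ZMod n × Fin k) :
    (MC n k).dist u v ≤ cdist n u.1 v.1 + Nat.dist u.2.1 v.2.1 := by
  obtain ⟨p, hp⟩ := exists_walk_le hn u v
  exact le_trans (SimpleGraph.dist_le p) hp

lemma mc_reachable (hn : 3 ≤ n) (u v : ZMod n × Fin k) : (MC n k).Reachable u v :=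
  ⟨(exists_walk_le hn u v).choose⟩
end S2

lemma val_add_one {n : ℕ} (hn : 3 ≤ n) (x : ZMod n) :
    (x + 1).val = if x.val + 1 = n then 0 else x.val + 1 := by
  haveI : NeZero n := ⟨by omega⟩
  haveI : Fact (1 < n) := ⟨by omega⟩
  rw [ZMod.val_add, ZMod.val_one]
  have := ZMod.val_lt x
  split
  · rename_i h; rw [h]; exact Nat.mod_self n
  · exact Nat.mod_eq_of_lt (by omega)

lemma val_sub_one {n : ℕ} (hn : 3 ≤ n) (x : ZMod n) :
    (x - 1).val = if x.val = 0 then n - 1 else x.val - 1 := by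
  haveI : NeZero n := ⟨by omega⟩
  have h1 : ((n - 1 : ℕ) : ZMod n) = -1 := by
    have : ((n : ℕ) : ZMod n) = 0 := ZMod.natCast_self n
    push_cast [Nat.cast_sub (by omega : 1 ≤ n)]
    rw [this]; ring
  have h2 : x - 1 = x + ((n - 1 : ℕ) : ZMod n) := by rw [h1]; ring
  rw [h2, ZMod.val_add, ZMod.val_natCast, Nat.mod_eq_of_lt (a := n-1) (b := n) (by omega)]
  have := ZMod.val_lt x
  split
  · rename_i h; rw [h, Nat.zero_add]; exact Nat.mod_eq_of_lt (by omega)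
  · rename_i h
    have : x.val + (n - 1) = (x.val - 1) + n := by omega
    rw [this, Nat.add_mod_right]
    exact Nat.mod_eq_of_lt (by omega)

lemma cdist_le_half {n : ℕ} (hn : 3 ≤ n) (a b : ZMod n) : cdist n a b ≤ n / 2 := by
  haveI : NeZero n := ⟨by omega⟩
  have := ZMod.val_lt (b - a)
  unfold cdist; omega

lemma cdist_succ_left {n : ℕ} (hn : 3 ≤ n) (a b : ZMod n) :
    cdist n (a + 1) b ≤ cdist n a b + 1 := by
  haveI : NeZero n := ⟨by omega⟩
  unfold cdist
  have h : b - (a + 1) = (b - a) - 1 := by ring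
  rw [h, val_sub_one hn]
  have := ZMod.val_lt (b - a)
  split <;> omega

lemma cdist_pred_left {n : ℕ} (hn : 3 ≤ n) (a b : ZMod n) :
    cdist n (a - 1) b ≤ cdist n a b + 1 := by
  haveI : NeZero n := ⟨by omega⟩
  unfold cdist
  have h : b - (a - 1) = (b - a) + 1 := by ring
  rw [h, val_add_one hn]
  have := ZMod.val_lt (b - a)
  split <;> omega

lemma cdist_self {n : ℕ} (hn : 3 ≤ n) (a : ZMod n) : cdist n a a = 0 := by
  unfold cdist; simp

lemma cdist_shift {n : ℕ} (hn : 3 ≤ n) (a : ZMod n) :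
    cdist n a (a + (n / 2 : ℕ)) = n / 2 := by
  haveI : NeZero n := ⟨by omega⟩
  unfold cdist
  have h : a + (n / 2 : ℕ) - a = ((n / 2 : ℕ) : ZMod n) := by ring
  rw [h, ZMod.val_natCast, Nat.mod_eq_of_lt (by omega)]
  omega

section S3
variable {n k : ℕ}

lemma phi_le_length (hn : 3 ≤ n) (v : ZMod n × Fin k) :
    ∀ (u : ZMod n × Fin k) (p : (MC n k).Walk u v),
      cdist n u.1 v.1 + Nat.dist u.2.1 v.2.1 ≤ p.length := by
  intro u p
  induction p with
  | nil => simp [cdist_self hn, Nat.dist_self]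
  | @cons u w v h p ih =>
    have key : cdist n u.1 v.1 + Nat.dist u.2.1 v.2.1 ≤
        cdist n w.1 v.1 + Nat.dist w.2.1 v.2.1 + 1 := by
      rcases h.2 with ⟨h1, h2⟩ | ⟨h1, h2⟩
      · -- layer move
        rw [h1]
        have : Nat.dist u.2.1 v.2.1 ≤ Nat.dist w.2.1 v.2.1 + 1 := by
          simp [Nat.dist] at *; omega
        omega
      · -- cycle move
        rw [h1]
        have : cdist n u.1 v.1 ≤ cdist n w.1 v.1 + 1 := by
          rcases h2 with h2 | h2
          · have : u.1 = w.1 - 1 := by rw [← h2]; ring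
            rw [this]; exact cdist_pred_left hn _ _
          · have : u.1 = w.1 + 1 := by rw [← h2]
            rw [this]; exact cdist_succ_left hn _ _
        omega
    calc cdist n u.1 v.1 + Nat.dist u.2.1 v.2.1
        ≤ cdist n w.1 v.1 + Nat.dist w.2.1 v.2.1 + 1 := key
      _ ≤ p.length + 1 := by omega
      _ = (SimpleGraph.Walk.cons h p).length := by simp

lemma mc_dist_ge (hn : 3 ≤ n) (u v : ZMod n × Fin k) :
    cdist n u.1 v.1 + Nat.dist u.2.1 v.2.1 ≤ (MC n k).dist u v := by
  obtain ⟨p, hp⟩ := (mc_reachable hn u v).exists_walk_length_eq_dist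
  rw [← hp]
  exact phi_le_length hn v u p
end S3

section S4
variable {n k : ℕ}

def layF (k q : ℕ) (hk : 2 ≤ k) : Fin k :=
  ⟨if q < k then q else k - 2, by split <;> omega⟩

def layG (k q : ℕ) (hk : 2 ≤ k) : Fin k :=
  ⟨if q = 0 then 1 else if q < k then q - 1 else k - 1, by split_ifs <;> omega⟩

def ftrk (n k : ℕ) (hk : 2 ≤ k) (i : ℕ) : ZMod n × Fin k :=
  (((i % (n+1) : ℕ) : ZMod n), layF k (i / (n+1)) hk)

def gtrk (n k : ℕ) (hk : 2 ≤ k) (i : ℕ) : ZMod n × Fin k :=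
  (((i % (n+1) : ℕ) : ZMod n) + ((n/2 : ℕ) : ZMod n), layG k (i / (n+1)) hk)

lemma layF_step (hk : 2 ≤ k) (q : ℕ) (h : q + 1 ≤ k) :
    (layF k q hk).1 + 1 = (layF k (q+1) hk).1 ∨ (layF k (q+1) hk).1 + 1 = (layF k q hk).1 := by
  simp only [layF]
  split_ifs <;> omega

lemma layG_step (hk : 2 ≤ k) (q : ℕ) (h : q + 1 ≤ k) :
    (layG k q hk).1 + 1 = (layG k (q+1) hk).1 ∨ (layG k (q+1) hk).1 + 1 = (layG k q hk).1 := by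
  simp only [layG]
  split_ifs <;> first | contradiction | omega

lemma lay_dist (hk : 2 ≤ k) (q : ℕ) :
    Nat.dist (layF k q hk).1 (layG k q hk).1 = 1 := by
  simp only [layF, layG, Nat.dist]
  split_ifs <;> omega

lemma div_mod_eq (n q r : ℕ) (h : r < n + 1) :
    ((n+1)*q + r) / (n+1) = q ∧ ((n+1)*q + r) % (n+1) = r := by
  constructor
  · rw [Nat.mul_add_div (by omega), Nat.div_eq_of_lt h, Nat.add_zero]
  · rw [Nat.mul_add_mod, Nat.mod_eq_of_lt h]

lemma ftrk_adj (hn : 3 ≤ n) (hk : 2 ≤ k) (i : ℕ) (hi : i + 1 < (k+1)*(n+1)) :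
    (MC n k).Adj (ftrk n k hk i) (ftrk n k hk (i+1)) := by
  have hsplit : (n+1) * (i / (n+1)) + i % (n+1) = i := Nat.div_add_mod i (n+1)
  have hrlt : i % (n+1) < n + 1 := Nat.mod_lt _ (by omega)
  set q := i / (n+1) with hq
  set r := i % (n+1) with hr0
  rcases Nat.lt_or_ge r n with hr | hr
  · have e0 : i + 1 = (n+1)*q + (r+1) := by omega
    have e1 : (i+1)/(n+1) = q := by rw [e0]; exact (div_mod_eq n q (r+1) (by omega)).1
    have e2 : (i+1)%(n+1) = r+1 := by rw [e0]; exact (div_mod_eq n q (r+1) (by omega)).2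
    unfold ftrk
    rw [e1, e2, ← hq, ← hr0]
    have : ((r+1 : ℕ) : ZMod n) = ((r : ℕ) : ZMod n) + 1 := by push_cast; ring
    rw [this]
    exact MC_adj_cycle hn _ _
  · have hrn : r = n := by omega
    have hmul : (n+1)*(q+1) = (n+1)*q + (n+1) := by ring
    have e0 : i + 1 = (n+1)*(q+1) + 0 := by omega
    have e1 : (i+1)/(n+1) = q+1 := by rw [e0]; exact (div_mod_eq n (q+1) 0 (by omega)).1
    have e2 : (i+1)%(n+1) = 0 := by rw [e0]; exact (div_mod_eq n (q+1) 0 (by omega)).2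
    have hqk : q + 1 ≤ k := by
      by_contra hcon
      have h1 : (n+1)*(k+1) ≤ (n+1)*(q+1) := Nat.mul_le_mul_left _ (by omega)
      have h2 : (k+1)*(n+1) = (n+1)*(k+1) := by ring
      omega
    unfold ftrk
    rw [e1, e2, ← hq, ← hr0, hrn]
    simp only [ZMod.natCast_self, Nat.cast_zero]
    exact MC_adj_layer_s12 0 _ _ (layF_step hk q hqk)

lemma gtrk_adj (hn : 3 ≤ n) (hk : 2 ≤ k) (i : ℕ) (hi : i + 1 < (k+1)*(n+1)) :
    (MC n k).Adj (gtrk n k hk i) (gtrk n k hk (i+1)) := by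
  have hsplit : (n+1) * (i / (n+1)) + i % (n+1) = i := Nat.div_add_mod i (n+1)
  have hrlt : i % (n+1) < n + 1 := Nat.mod_lt _ (by omega)
  set q := i / (n+1) with hq
  set r := i % (n+1) with hr0
  rcases Nat.lt_or_ge r n with hr | hr
  · have e0 : i + 1 = (n+1)*q + (r+1) := by omega
    have e1 : (i+1)/(n+1) = q := by rw [e0]; exact (div_mod_eq n q (r+1) (by omega)).1
    have e2 : (i+1)%(n+1) = r+1 := by rw [e0]; exact (div_mod_eq n q (r+1) (by omega)).2
    unfold gtrk
    rw [e1, e2, ← hq, ← hr0]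
    have : ((r+1 : ℕ) : ZMod n) + ((n/2 : ℕ) : ZMod n)
        = (((r : ℕ) : ZMod n) + ((n/2 : ℕ) : ZMod n)) + 1 := by push_cast; ring
    rw [this]
    exact MC_adj_cycle hn _ _
  · have hrn : r = n := by omega
    have hmul : (n+1)*(q+1) = (n+1)*q + (n+1) := by ring
    have e0 : i + 1 = (n+1)*(q+1) + 0 := by omega
    have e1 : (i+1)/(n+1) = q+1 := by rw [e0]; exact (div_mod_eq n (q+1) 0 (by omega)).1
    have e2 : (i+1)%(n+1) = 0 := by rw [e0]; exact (div_mod_eq n (q+1) 0 (by omega)).2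
    have hqk : q + 1 ≤ k := by
      by_contra hcon
      have h1 : (n+1)*(k+1) ≤ (n+1)*(q+1) := Nat.mul_le_mul_left _ (by omega)
      have h2 : (k+1)*(n+1) = (n+1)*(k+1) := by ring
      omega
    unfold gtrk
    rw [e1, e2, ← hq, ← hr0, hrn]
    simp only [ZMod.natCast_self, Nat.cast_zero, zero_add]
    exact MC_adj_layer_s12 _ _ _ (layG_step hk q hqk)

lemma ftrk_surj (hn : 3 ≤ n) (hk : 2 ≤ k) (v : ZMod n × Fin k) :
    ∃ i : ℕ, i < (k+1)*(n+1) ∧ ftrk n k hk i = v := by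
  haveI : NeZero n := ⟨by omega⟩
  obtain ⟨a, j⟩ := v
  refine ⟨(n+1)*j.1 + a.val, ?_, ?_⟩
  · have h1 : (n+1)*j.1 ≤ (n+1)*(k-1) := Nat.mul_le_mul_left _ (by omega)
    have h2 : a.val < n := ZMod.val_lt a
    have e : (k+1)*(n+1) = (n+1)*(k-1) + (n+1)*2 := by
      have : k+1 = (k-1)+2 := by omega
      rw [this]; ring
    omega
  · have hdm := div_mod_eq n j.1 a.val (by have := ZMod.val_lt a; omega)
    unfold ftrk
    rw [hdm.1, hdm.2, cast_val_eq hn]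
    refine Prod.ext rfl (Fin.ext ?_)
    simp [layF, j.2]

lemma gtrk_surj (hn : 3 ≤ n) (hk : 2 ≤ k) (v : ZMod n × Fin k) :
    ∃ i : ℕ, i < (k+1)*(n+1) ∧ gtrk n k hk i = v := by
  haveI : NeZero n := ⟨by omega⟩
  obtain ⟨a, j⟩ := v
  have hrlt : (a - ((n/2 : ℕ) : ZMod n)).val < n := ZMod.val_lt _
  have hcoord : (((a - ((n/2 : ℕ) : ZMod n)).val : ℕ) : ZMod n) + ((n/2 : ℕ) : ZMod n) = a := by
    rw [cast_val_eq hn]; ring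
  rcases eq_or_ne j.1 (k-1) with hj | hj
  · refine ⟨(n+1)*k + (a - ((n/2 : ℕ) : ZMod n)).val, ?_, ?_⟩
    · have e : (k+1)*(n+1) = (n+1)*k + (n+1) := by ring
      omega
    · have hdm := div_mod_eq n k ((a - ((n/2 : ℕ) : ZMod n)).val) (by omega)
      unfold gtrk
      rw [hdm.1, hdm.2, hcoord]
      refine Prod.ext rfl (Fin.ext ?_)
      simp only [layG]
      split_ifs <;> first | contradiction | omega
  · refine ⟨(n+1)*(j.1+1) + (a - ((n/2 : ℕ) : ZMod n)).val, ?_, ?_⟩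
    · have hjk : j.1 + 1 ≤ k - 1 := by have := j.2; omega
      have h1 : (n+1)*(j.1+1) ≤ (n+1)*(k-1) := Nat.mul_le_mul_left _ hjk
      have e : (k+1)*(n+1) = (n+1)*(k-1) + (n+1)*2 := by
        have : k+1 = (k-1)+2 := by omega
        rw [this]; ring
      omega
    · have hdm := div_mod_eq n (j.1+1) ((a - ((n/2 : ℕ) : ZMod n)).val) (by omega)
      unfold gtrk
      rw [hdm.1, hdm.2, hcoord]
      refine Prod.ext rfl (Fin.ext ?_)
      have hjk : j.1 + 1 < k := by have := j.2; omega
      simp only [layG]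
      split_ifs <;> first | contradiction | omega

lemma ivt_aux_s12 {l : ℕ} (h : Fin l → ℤ)
    (hstep : ∀ (i : ℕ) (hi : i + 1 < l),
      h ⟨i+1, hi⟩ ≤ h ⟨i, Nat.lt_of_succ_lt hi⟩ + 2 ∧
      h ⟨i, Nat.lt_of_succ_lt hi⟩ ≤ h ⟨i+1, hi⟩ + 2) :
    ∀ (d : ℕ) (a b : Fin l), a.1 ≤ b.1 → b.1 - a.1 ≤ d →
      ((h a ≤ 0 ∧ 0 ≤ h b) ∨ (h b ≤ 0 ∧ 0 ≤ h a)) →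
      ∃ i : Fin l, -1 ≤ h i ∧ h i ≤ 1 := by
  intro d
  induction d with
  | zero =>
    intro a b hab hd hsign
    have : a = b := Fin.ext (by omega)
    subst this
    exact ⟨a, by rcases hsign with ⟨h1, h2⟩ | ⟨h1, h2⟩ <;> constructor <;> omega⟩
  | succ d ih =>
    intro a b hab hd hsign
    by_cases hmid : -1 ≤ h a ∧ h a ≤ 1
    · exact ⟨a, hmid⟩
    · rcases eq_or_lt_of_le hab with heq | hlt
      · have : a = b := Fin.ext heq
        subst this
        exact ⟨a, by rcases hsign with ⟨h1, h2⟩ | ⟨h1, h2⟩ <;> constructor <;> omega⟩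
      · have ha1 : a.1 + 1 < l := lt_of_le_of_lt hlt b.2
        have hst := hstep a.1 ha1
        have haa : (⟨a.1, Nat.lt_of_succ_lt ha1⟩ : Fin l) = a := Fin.ext rfl
        rw [haa] at hst
        rcases hsign with ⟨h1, h2⟩ | ⟨h1, h2⟩
        · have hle : h a ≤ -2 := by
            rcases (not_and_or.mp hmid) with hc | hc <;> omega
          exact ih ⟨a.1 + 1, ha1⟩ b (by simpa using hlt) (by simp; omega)
            (Or.inl ⟨by omega, h2⟩)
        · have hge : 2 ≤ h a := by
            rcases (not_and_or.mp hmid) with hc | hc <;> omega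
          exact ih ⟨a.1 + 1, ha1⟩ b (by simpa using hlt) (by simp; omega)
            (Or.inr ⟨h1, by omega⟩)

lemma adj_layer_bound (u v : ZMod n × Fin k) (h : (MC n k).Adj u v) :
    u.2.1 ≤ v.2.1 + 1 ∧ v.2.1 ≤ u.2.1 + 1 := by
  rcases h.2 with ⟨-, h2⟩ | ⟨h2, -⟩
  · omega
  · rw [h2]; omega

end S4


theorem stmt12 (n k : ℕ) (hn : 3 ≤ n) (hk : 2 ≤ k) :
    (∃ l : ℕ, ∃ f g : Fin l → ZMod n × Fin k,
      IsTrack (MC n k) f ∧ IsTrack (MC n k) g ∧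
      ∀ i : Fin l, n / 2 + 1 ≤ (MC n k).dist (f i) (g i)) ∧
    IsGreatest {m : ℕ | ∃ l : ℕ, ∃ f g : Fin l → ZMod n × Fin k,
      IsLazyTrack (MC n k) f ∧ IsLazyTrack (MC n k) g ∧
      ∀ i : Fin l, m ≤ (MC n k).dist (f i) (g i)} (n / 2 + 1) ∧
    IsGreatest {m : ℕ | ∃ l : ℕ, ∃ f g : Fin l → ZMod n × Fin k,
      IsTrack (MC n k) f ∧ IsTrack (MC n k) g ∧
      ∀ i : Fin l, m ≤ (MC n k).dist (f i) (g i)} (n / 2 + 1) := by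
  haveI : NeZero n := ⟨by omega⟩
  -- the constructed tracks
  set l := (k+1)*(n+1) with hl
  set f : Fin l → ZMod n × Fin k := fun i => ftrk n k hk i.1 with hf
  set g : Fin l → ZMod n × Fin k := fun i => gtrk n k hk i.1 with hg
  have hfT : IsTrack (MC n k) f := by
    constructor
    · intro v
      obtain ⟨i, hi, hv⟩ := ftrk_surj hn hk v
      exact ⟨⟨i, hi⟩, hv⟩
    · intro i h
      exact ftrk_adj hn hk i.1 h
  have hgT : IsTrack (MC n k) g := by
    constructor
    · intro v
      obtain ⟨i, hi, hv⟩ := gtrk_surj hn hk v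
      exact ⟨⟨i, hi⟩, hv⟩
    · intro i h
      exact gtrk_adj hn hk i.1 h
  have hdist : ∀ i : Fin l, n / 2 + 1 ≤ (MC n k).dist (f i) (g i) := by
    intro i
    have hge := mc_dist_ge hn (f i) (g i)
    have h1 : cdist n (f i).1 (g i).1 = n / 2 := cdist_shift hn _
    have h2 : Nat.dist (f i).2.1 (g i).2.1 = 1 := lay_dist hk _
    omega
  have hfL : IsLazyTrack (MC n k) f := ⟨hfT.1, fun i h => Or.inr (hfT.2 i h)⟩
  have hgL : IsLazyTrack (MC n k) g := ⟨hgT.1, fun i h => Or.inr (hgT.2 i h)⟩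
  -- upper bound for lazy tracks
  have hub : ∀ m : ℕ, (∃ l' : ℕ, ∃ f' g' : Fin l' → ZMod n × Fin k,
      IsLazyTrack (MC n k) f' ∧ IsLazyTrack (MC n k) g' ∧
      ∀ i : Fin l', m ≤ (MC n k).dist (f' i) (g' i)) → m ≤ n / 2 + 1 := by
    rintro m ⟨l', f', g', ⟨fs, fstep⟩, ⟨gs, gstep⟩, hd⟩
    obtain ⟨i0, hi0⟩ := fs (0, ⟨0, by omega⟩)
    obtain ⟨i1, hi1⟩ := fs (0, ⟨k-1, by omega⟩)
    set D : Fin l' → ℤ := fun i => ((f' i).2.1 : ℤ) - ((g' i).2.1 : ℤ) with hD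
    have hstep : ∀ (i : ℕ) (hi : i + 1 < l'),
        D ⟨i+1, hi⟩ ≤ D ⟨i, Nat.lt_of_succ_lt hi⟩ + 2 ∧
        D ⟨i, Nat.lt_of_succ_lt hi⟩ ≤ D ⟨i+1, hi⟩ + 2 := by
      intro i hi
      have hi' : i < l' := Nat.lt_of_succ_lt hi
      have hf12 : f' ⟨i+1, hi⟩ = f' ⟨i, hi'⟩ ∨
          (MC n k).Adj (f' ⟨i, hi'⟩) (f' ⟨i+1, hi⟩) := fstep ⟨i, hi'⟩ hi
      have hg12 : g' ⟨i+1, hi⟩ = g' ⟨i, hi'⟩ ∨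
          (MC n k).Adj (g' ⟨i, hi'⟩) (g' ⟨i+1, hi⟩) := gstep ⟨i, hi'⟩ hi
      have hfb : (f' ⟨i+1, hi⟩).2.1 ≤ (f' ⟨i, hi'⟩).2.1 + 1 ∧
          (f' ⟨i, hi'⟩).2.1 ≤ (f' ⟨i+1, hi⟩).2.1 + 1 := by
        rcases hf12 with he | ha
        · rw [he]; omega
        · exact ⟨(adj_layer_bound _ _ ha).2, (adj_layer_bound _ _ ha).1⟩
      have hgb : (g' ⟨i+1, hi⟩).2.1 ≤ (g' ⟨i, hi'⟩).2.1 + 1 ∧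
          (g' ⟨i, hi'⟩).2.1 ≤ (g' ⟨i+1, hi⟩).2.1 + 1 := by
        rcases hg12 with he | ha
        · rw [he]; omega
        · exact ⟨(adj_layer_bound _ _ ha).2, (adj_layer_bound _ _ ha).1⟩
      simp only [hD]
      omega
    have h0 : D i0 ≤ 0 := by
      simp only [hD, hi0]
      have : ((g' i0).2.1 : ℤ) ≥ 0 := Int.natCast_nonneg _
      omega
    have h1 : 0 ≤ D i1 := by
      simp only [hD, hi1]
      have := (g' i1).2.2
      omega
    have hcross : ∃ i : Fin l', -1 ≤ D i ∧ D i ≤ 1 := by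
      rcases le_total i0.1 i1.1 with hc | hc
      · exact ivt_aux_s12 D hstep (i1.1 - i0.1) i0 i1 hc (by omega) (Or.inl ⟨h0, h1⟩)
      · exact ivt_aux_s12 D hstep (i0.1 - i1.1) i1 i0 hc (by omega) (Or.inr ⟨h0, h1⟩)
    obtain ⟨i, hc1, hc2⟩ := hcross
    have hle := mc_dist_le hn (f' i) (g' i)
    have hcd := cdist_le_half hn (f' i).1 (g' i).1
    have hnd : Nat.dist (f' i).2.1 (g' i).2.1 ≤ 1 := by
      simp only [hD] at hc1 hc2
      simp only [Nat.dist]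
      omega
    have := hd i
    omega
  refine ⟨⟨l, f, g, hfT, hgT, hdist⟩, ⟨⟨l, f, g, hfL, hgL, hdist⟩, ?_⟩,
    ⟨⟨l, f, g, hfT, hgT, hdist⟩, ?_⟩⟩
  · intro m hm
    exact hub m hm
  · rintro m ⟨l', f', g', hf', hg', hd'⟩
    exact hub m ⟨l', f', g', ⟨hf'.1, fun i h => Or.inr (hf'.2 i h)⟩,
      ⟨hg'.1, fun i h => Or.inr (hg'.2 i h)⟩, hd'⟩
end
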